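/- Let k be a perfect field of characteristic 2, let s ∈ k with s ≠ 0 be such that x³ + s x + s is irreducible in k[x], and let K = k(θ) for a root θ of x³ + s x + s. Then the extension K/k is Galois (equivalently, cyclic of degree 3) if and only if s + 1 ∈ AS(k). -/

import Mathlib

open Polynomial

private theorem cubic_factor {R : Type*} [CommRing R] (a b c s : R)
    (h1 : a + b + c = 0) (h2 : a * b + a * c + b * c = s) (h3 : a * b * c = -s) :
    (X ^ 3 + C s * X + C s : R[X]) = (X - C a) * (X - C b) * (X - C c) := by
  have h1' : C a + C b + C c = 0 := by rw [← map_add, ← map_add, h1, map_zero]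
  have h2' : C a * C b + C a * C c + C b * C c = C s := by
    rw [← map_mul, ← map_mul, ← map_mul, ← map_add, ← map_add, h2]
  have h3' : C a * C b * C c = - C s := by
    rw [← map_mul, ← map_mul, h3, map_neg]
  linear_combination X ^ 2 * h1' - X * h2' + h3'

theorem isGalois_adjoin_root_artin_schreier_cubic_iff
    (k : Type*) [Field k] [CharP k 2] [PerfectField k] (s : k) (hs : s ≠ 0)
    (hirr : Irreducible (X ^ 3 + C s * X + C s : k[X]))
    (θ : AlgebraicClosure k)
    (hθ : aeval θ (X ^ 3 + C s * X + C s : k[X]) = 0) :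
    IsGalois k (IntermediateField.adjoin k {θ}) ↔ ∃ x : k, x + x ^ 2 = s + 1 := by
  set f : k[X] := X ^ 3 + C s * X + C s with hf
  have hdeg : f.natDegree = 3 := by unfold f; compute_degree!
  have hmonic : f.Monic := by
    rw [Monic, Polynomial.leadingCoeff, hdeg, hf]
    simp [coeff_X_pow, coeff_C]
  have hf0 : f ≠ 0 := hmonic.ne_zero
  have hint : IsIntegral k θ := ⟨f, hmonic, by simpa [aeval_def] using hθ⟩
  have hmin : minpoly k θ = f := (minpoly.eq_of_irreducible_of_monic hirr hθ hmonic).symm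
  set K := IntermediateField.adjoin k {θ} with hK
  haveI : FiniteDimensional k K := IntermediateField.adjoin.finiteDimensional hint
  have hfr : Module.finrank k K = 3 := by
    rw [hK, IntermediateField.adjoin.finrank hint, hmin, hdeg]
  have h2W : (2 : (AlgebraicClosure k)) = 0 := by
    haveI : CharP (AlgebraicClosure k) 2 := charP_of_injective_algebraMap (algebraMap k (AlgebraicClosure k)).injective 2
    exact_mod_cast CharP.cast_eq_zero (AlgebraicClosure k) 2
  set s2 : (AlgebraicClosure k) := algebraMap k (AlgebraicClosure k) s with hs2
  have hθ0 : θ ^ 3 + s2 * θ + s2 = 0 := by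
    have := hθ
    simp only [hf, map_add, map_mul, map_pow, aeval_X, aeval_C] at this
    exact this
  constructor
  · intro hgal
    have hθne : θ ≠ 0 := by
      intro h
      rw [h] at hθ0
      apply hs
      apply (algebraMap k (AlgebraicClosure k)).injective
      rw [map_zero]
      linear_combination hθ0
    set θ' : K := ⟨θ, IntermediateField.mem_adjoin_simple_self k θ⟩ with hθ'def
    have hcard : Fintype.card (K ≃ₐ[k] K) = 3 := by
      rw [← Nat.card_eq_fintype_card, IsGalois.card_aut_eq_finrank, hfr]
    obtain ⟨σ, hσ⟩ := Fintype.exists_ne_of_one_lt_card (by rw [hcard]; norm_num) (1 : K ≃ₐ[k] K)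
    have hne : σ θ' ≠ θ' := by
      intro h
      apply hσ
      have hext : (σ : K →ₐ[k] K) = ((1 : K ≃ₐ[k] K) : K →ₐ[k] K) := by
        apply (IntermediateField.adjoin.powerBasis hint).algHom_ext
        exact h
      exact AlgEquiv.ext fun z => congrArg (fun (φ : K →ₐ[k] K) => φ z) hext
    have hinj : Function.Injective (algebraMap K (AlgebraicClosure k)) :=
      (algebraMap K (AlgebraicClosure k)).injective
    have hθ'f : aeval θ' f = 0 := by
      apply hinj
      rw [map_zero, ← Polynomial.aeval_algebraMap_apply]
      exact hθ
    have hβf : aeval (σ θ') f = 0 := by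
      have h := Polynomial.aeval_algHom_apply (σ : K →ₐ[k] K) θ' f
      simp only [AlgEquiv.coe_algHom] at h
      rw [hθ'f, map_zero] at h
      exact h
    set b : AlgebraicClosure k := algebraMap K (AlgebraicClosure k) (σ θ') with hbdef
    have hb0 : b ^ 3 + s2 * b + s2 = 0 := by
      have h := congrArg (algebraMap K (AlgebraicClosure k)) hβf
      rw [map_zero, ← Polynomial.aeval_algebraMap_apply, ← hbdef] at h
      simp only [hf, map_add, map_mul, map_pow, aeval_X, aeval_C] at h
      exact h
    have hbθ : b ≠ θ := by
      intro h
      apply hne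
      apply hinj
      exact h
    have hd : θ ^ 2 + θ * b + b ^ 2 + s2 = 0 := by
      have hfac : (θ - b) * (θ ^ 2 + θ * b + b ^ 2 + s2) = 0 := by
        linear_combination hθ0 - hb0
      exact (mul_eq_zero.mp hfac).resolve_left (sub_ne_zero.mpr fun h => hbθ h.symm)
    set w : AlgebraicClosure k := θ + b / θ with hwdef
    have hw1 : w * θ = θ ^ 2 + b := by
      rw [hwdef]; field_simp
    have key : w ^ 2 + w = s2 + 1 := by
      apply mul_right_cancel₀ (pow_ne_zero 2 hθne)
      linear_combination (w * θ + θ ^ 2 + b) * hw1 + θ * hw1 + hd + (θ + 1) * hθ0 +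
        (θ ^ 2 * b - s2 * θ ^ 2 - θ ^ 2 - s2 * θ - s2) * h2W
    have hbK : b ∈ K := by rw [hbdef]; exact (σ θ').2
    have hwK : w ∈ K := by
      rw [hwdef]
      exact K.add_mem (IntermediateField.mem_adjoin_simple_self k θ)
        (K.div_mem hbK (IntermediateField.mem_adjoin_simple_self k θ))
    set w' : K := ⟨w, hwK⟩ with hw'def
    set g : k[X] := X ^ 2 + X + C (s + 1) with hg
    have hgdeg : g.natDegree = 2 := by unfold g; compute_degree!
    have hg0 : g ≠ 0 := fun h => by simp [h] at hgdeg
    have hwg : aeval w' g = 0 := by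
      apply hinj
      rw [map_zero, ← Polynomial.aeval_algebraMap_apply]
      have : algebraMap K (AlgebraicClosure k) w' = w := rfl
      rw [this]
      simp only [hg, map_add, map_pow, aeval_X, aeval_C, map_one]
      have h2' : (algebraMap k (AlgebraicClosure k)) (s + 1) = s2 + 1 := by
        rw [map_add, map_one, hs2]
      linear_combination key + (s2 + 1) * h2W
    have hw'int : IsIntegral k w' := Algebra.IsIntegral.isIntegral w'
    have hdvd : minpoly k w' ∣ g := minpoly.dvd k w' hwg
    have hle2 : (minpoly k w').natDegree ≤ 2 := hgdeg ▸ natDegree_le_of_dvd hdvd hg0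
    have hdvd3 : (minpoly k w').natDegree ∣ 3 := hfr ▸ minpoly.degree_dvd hw'int
    have hpos : 0 < (minpoly k w').natDegree := minpoly.natDegree_pos hw'int
    have hone : (minpoly k w').natDegree = 1 := by
      interval_cases h : (minpoly k w').natDegree
      · rfl
      · omega
    obtain ⟨x, hxw⟩ := minpoly.natDegree_eq_one_iff.mp hone
    refine ⟨x, ?_⟩
    apply (algebraMap k (AlgebraicClosure k)).injective
    have hxw2 : algebraMap k (AlgebraicClosure k) x = w := by
      rw [IsScalarTower.algebraMap_apply k K (AlgebraicClosure k), hxw]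
      rfl
    rw [map_add, map_pow, map_add, map_one, hxw2, ← hs2]
    linear_combination key
  · rintro ⟨x, hx⟩
    set x2 : (AlgebraicClosure k) := algebraMap k (AlgebraicClosure k) x with hhx2def
    have hx2 : x2 + x2 ^ 2 = s2 + 1 := by
      rw [hhx2def, hs2, ← map_pow, ← map_add, hx, map_add, map_one]
    set β : (AlgebraicClosure k) := θ ^ 2 + x2 * θ with hβ
    set γ : (AlgebraicClosure k) := θ ^ 2 + (x2 + 1) * θ with hγ
    have E1 : θ + β + γ = 0 := by
      rw [hβ, hγ]; linear_combination (θ ^ 2 + x2 * θ + θ) * h2W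
    have E2 : θ * β + θ * γ + β * γ = s2 := by
      rw [hβ, hγ]
      linear_combination (θ + 3 + 2 * x2) * hθ0 + θ ^ 2 * hx2 +
        ((1 + x2) * θ ^ 2 - (2 + x2) * s2 * θ - (2 + x2) * s2) * h2W
    have E3 : θ * β * γ = -s2 := by
      rw [hβ, hγ]
      linear_combination (θ ^ 2 + (1 + 2 * x2) * θ + (x2 + x2 ^ 2) - s2) * hθ0 -
        s2 * (θ + 1) * hx2 - s2 * (1 + x2) * (θ ^ 2 + θ) * h2W
    have hfact : (X ^ 3 + C s2 * X + C s2 : (AlgebraicClosure k)[X]) = (X - C θ) * (X - C β) * (X - C γ) :=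
      cubic_factor θ β γ s2 E1 E2 E3
    have hmap : f.map (algebraMap k (AlgebraicClosure k)) = X ^ 3 + C s2 * X + C s2 := by
      simp [hf, Polynomial.map_add, Polynomial.map_mul, Polynomial.map_pow, map_C, map_X, hs2]
    have hθK : θ ∈ K := IntermediateField.mem_adjoin_simple_self k θ
    have hxK : x2 ∈ K := K.algebraMap_mem x
    have hθ2K : θ ^ 2 ∈ K := by rw [sq]; exact K.mul_mem hθK hθK
    have hβK : β ∈ K := by
      rw [hβ]; exact K.add_mem hθ2K (K.mul_mem hxK hθK)
    have hγK : γ ∈ K := by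
      rw [hγ]; exact K.add_mem hθ2K (K.mul_mem (K.add_mem hxK (K.one_mem)) hθK)
    have hroots : f.rootSet (AlgebraicClosure k) ⊆ (K : Set (AlgebraicClosure k)) := by
      intro y hy
      rw [mem_rootSet] at hy
      have : (y - θ) * (y - β) * (y - γ) = 0 := by
        have h := hy.2
        rw [aeval_def, ← eval_map, hmap, hfact] at h
        simpa using h
      rcases mul_eq_zero.mp this with h | h
      · rcases mul_eq_zero.mp h with h | h
        · rw [sub_eq_zero] at h; rw [h]; exact hθK
        · rw [sub_eq_zero] at h; rw [h]; exact hβK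
      · rw [sub_eq_zero] at h; rw [h]; exact hγK
    have hsplitsW : Splits (f.map (algebraMap k (AlgebraicClosure k))) := IsAlgClosed.splits _
    have hKeq : IntermediateField.adjoin k (f.rootSet (AlgebraicClosure k)) = K := by
      apply le_antisymm
      · exact IntermediateField.adjoin_le_iff.mpr hroots
      · exact IntermediateField.adjoin.mono k _ _
          (Set.singleton_subset_iff.mpr (by rw [mem_rootSet]; exact ⟨hf0, hθ⟩))
    haveI : IsSplittingField k K f := by
      rw [← hKeq]
      exact IntermediateField.adjoin_rootSet_isSplittingField hsplitsW
    haveI : Normal k K := Normal.of_isSplittingField f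
    haveI : Algebra.IsAlgebraic k K := Algebra.IsAlgebraic.of_finite k K
    exact ⟨⟩
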